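/- Let A be an associative ring with 1 and let U be a two-sided ideal of A that is locally nilpotent, i.e., every subring of A generated by finitely many elements of U is nilpotent. Then H = { u ∈ A^× : u − 1 ∈ U } is a normal subgroup of the group A^× of invertible elements of A, and H is a locally nilpotent group. -/

import Mathlib

/-- Engel words with the convention of the paper: the commutator is
`[x, y] = x⁻¹ * y⁻¹ * x * y`, `engelWord 0 x y = x` and
`engelWord (n+1) x y = [engelWord n x y, y]`; thus for `n ≥ 1`,
`engelWord n x y` is the Engel word `e_n(x, y)`. -/
def engelWord {G : Type*} [Group G] : ℕ → G → G → G
  | 0, x, _ => x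
  | n + 1, x, y => (engelWord n x y)⁻¹ * y⁻¹ * engelWord n x y * y

/-- Iterated Engel words: `epsEngel [(n₁,a₁),…,(n_k,a_k)] y` is
`ε_{(n₁,…,n_k)}(a₁,…,a_k; y)`, defined by `ε_{(n₁)}(a₁;y) = e_{n₁}(a₁,y)` and
`ε_{(n₁,…,n_k)}(a₁,…,a_k;y) = e_{n_k}(a_k, ε_{(n₁,…,n_{k-1})}(a₁,…,a_{k-1};y))`. -/
def epsEngel {G : Type*} [Group G] (l : List (ℕ × G)) (y : G) : G :=
  l.foldl (fun z p => engelWord p.1 p.2 z) y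

/-- `g` is a nil-element if for every `a` there is `n ≥ 1` with `e_n(a, g) = 1`. -/
def IsNilElement {G : Type*} [Group G] (g : G) : Prop :=
  ∀ a : G, ∃ n, 1 ≤ n ∧ engelWord n a g = 1

/-- A group is locally nilpotent if every finitely generated subgroup is nilpotent. -/
def LocallyNilpotent (G : Type*) [Group G] : Prop :=
  ∀ H : Subgroup G, H.FG → Group.IsNilpotent H

/-- `g` is quasi-nil of order ≤ `k`: there are functions `ν i : G^(i+1) → ℕ` (with values ≥ 1,
`ν i` depending only on `a₁,…,a_{i+1}` and `g`) such that for all `a : Fin k → G`,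
`ε_{(ν₁(a₁),…,ν_k(a₁,…,a_k))}(a₁,…,a_k; g) = 1`. -/
def IsQuasiNilOfOrder {G : Type*} [Group G] (k : ℕ) (g : G) : Prop :=
  ∃ ν : ∀ i : Fin k, (Fin ((i : ℕ) + 1) → G) → ℕ,
    (∀ i f, 1 ≤ ν i f) ∧
    ∀ a : Fin k → G,
      epsEngel (List.ofFn fun i : Fin k =>
        (ν i fun j => a (Fin.castLE i.isLt j), a i)) g = 1

/-- `g` is quasi-nil if it is quasi-nil of order ≤ `k` for some `k ≥ 1`. -/
def IsQuasiNil {G : Type*} [Group G] (g : G) : Prop :=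
  ∃ k, 1 ≤ k ∧ IsQuasiNilOfOrder k g

/-- `g` maps to a nil-element of the quotient `G ⧸ N` (for `N` normal). -/
def IsNilElementQuot {G : Type*} [Group G] (N : Subgroup G) (hN : N.Normal) (g : G) : Prop :=
  @IsNilElement (G ⧸ N) (@QuotientGroup.Quotient.group G _ N hN) (QuotientGroup.mk g)

section Aux


variable {A : Type*} [Ring A]

lemma aux_unit_inv_sub_one (u : Aˣ) :
    ((u⁻¹ : Aˣ) : A) - 1 = -(((u⁻¹ : Aˣ) : A) * ((u : A) - 1)) := by
  have h : ((u⁻¹ : Aˣ) : A) * (u : A) = 1 := u.inv_mul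
  rw [mul_sub, h, mul_one, neg_sub]

end Aux

open scoped commutatorElement

/-- for a locally nilpotent two-sided ideal `U` of a ring `A` with 1
(every subring generated by finitely many elements of `U` is nilpotent),
`H = {u ∈ Aˣ : u - 1 ∈ U}` is a normal subgroup of `Aˣ` and is locally nilpotent. -/
theorem units_one_add_locallyNilpotent_ideal_locallyNilpotent (A : Type*) [Ring A]
    (U : TwoSidedIdeal A)
    (hU : ∀ s : Finset A, (s : Set A) ⊆ (U : Set A) →
      ∃ m, 1 ≤ m ∧ ∀ f : Fin m → A,
        (∀ i, f i ∈ NonUnitalSubring.closure (s : Set A)) → (List.ofFn f).prod = 0) :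
    ∃ H : Subgroup Aˣ, (∀ u : Aˣ, u ∈ H ↔ (u : A) - 1 ∈ U) ∧ H.Normal ∧
      LocallyNilpotent H := by

  classical
  let H : Subgroup Aˣ :=
  { carrier := {u : Aˣ | (u : A) - 1 ∈ U}
    one_mem' := by set_option linter.unnecessarySimpa false in simpa using U.zero_mem
    mul_mem' := by
      intro u v hu hv
      have e : ((u * v : Aˣ) : A) - 1 = (u : A) * ((v : A) - 1) + ((u : A) - 1) := by
        push_cast; noncomm_ring
      show ((u * v : Aˣ) : A) - 1 ∈ U
      rw [e]
      exact U.add_mem (U.mul_mem_left _ _ hv) hu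
    inv_mem' := by
      intro u hu
      show ((u⁻¹ : Aˣ) : A) - 1 ∈ U
      rw [aux_unit_inv_sub_one]
      exact U.neg_mem (U.mul_mem_left _ _ hu) }
  have memH : ∀ u : Aˣ, u ∈ H ↔ (u : A) - 1 ∈ U := fun u => Iff.rfl
  refine ⟨H, memH, ?_, ?_⟩
  · constructor
    intro n hn g
    show ((g * n * g⁻¹ : Aˣ) : A) - 1 ∈ U
    have hgg : (g : A) * ((g⁻¹ : Aˣ) : A) = 1 := g.mul_inv
    have e : ((g * n * g⁻¹ : Aˣ) : A) - 1
        = (g : A) * ((n : A) - 1) * ((g⁻¹ : Aˣ) : A) := by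
      push_cast
      rw [mul_sub, mul_one, sub_mul, hgg]
    rw [e]
    exact U.mul_mem_right _ _ (U.mul_mem_left _ _ hn)
  · intro K hK
    obtain ⟨T, hT⟩ := hK
    set K' : Subgroup Aˣ := K.map H.subtype with hK'def
    let T' : Finset Aˣ := T.image H.subtype
    have hT' : Subgroup.closure (T' : Set Aˣ) = K' := by
      rw [hK'def, ← hT, MonoidHom.map_closure]
      congr 1
      simp [T']
    have hK'leH : K' ≤ H := Subgroup.map_subtype_le K
    have hT'K' : (T' : Set Aˣ) ⊆ K' := hT' ▸ Subgroup.subset_closure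
    let s : Finset A :=
      T'.image (fun u : Aˣ => (u : A) - 1) ∪ T'.image (fun u : Aˣ => ((u⁻¹ : Aˣ) : A) - 1)
    have hsU : (s : Set A) ⊆ (U : Set A) := by
      intro x hx
      simp only [s, Finset.coe_union, Set.mem_union, Finset.coe_image, Set.mem_image,
        Finset.mem_coe] at hx
      rcases hx with ⟨u, hu, rfl⟩ | ⟨u, hu, rfl⟩
      · exact hK'leH (hT'K' hu)
      · exact H.inv_mem (hK'leH (hT'K' hu))
    obtain ⟨m, hm1, hm⟩ := hU s hsU
    set S := NonUnitalSubring.closure (s : Set A) with hSdef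
    let N : Submodule ℤ A := AddSubgroup.toIntSubmodule S.toAddSubgroup
    have memN : ∀ {x : A}, x ∈ N ↔ x ∈ S := fun {x} => Iff.rfl
    have hNN : N * N ≤ N := by
      rw [Submodule.mul_le]
      intro x hx y hy
      exact memN.mpr (mul_mem (memN.mp hx) (memN.mp hy))
    have hpow_succ_le : ∀ n : ℕ, N ^ (n + 2) ≤ N ^ (n + 1) := by
      intro n
      induction n with
      | zero => simpa [pow_succ, pow_one] using hNN
      | succ k ih =>
        calc N ^ (k + 3) = N ^ (k + 2) * N := by rw [pow_succ]
        _ ≤ N ^ (k + 1) * N := mul_le_mul' ih le_rfl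
        _ = N ^ (k + 2) := (pow_succ _ _).symm
    have hpow_le_N : ∀ n : ℕ, N ^ (n + 1) ≤ N := by
      intro n
      induction n with
      | zero => simp
      | succ k ih => exact (hpow_succ_le k).trans ih
    have hmulN : ∀ (n : ℕ) {a b : A}, a ∈ N ^ (n + 1) → b ∈ N → a * b ∈ N ^ (n + 1) := by
      intro n a b ha hb
      have h2 : a * b ∈ N ^ (n + 1) * N := Submodule.mul_mem_mul ha hb
      rw [← pow_succ] at h2
      exact hpow_succ_le n h2
    have hmulN' : ∀ (n : ℕ) {a b : A}, a ∈ N → b ∈ N ^ (n + 1) → a * b ∈ N ^ (n + 1) := by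
      intro n a b ha hb
      have h2 : a * b ∈ N * N ^ (n + 1) := Submodule.mul_mem_mul ha hb
      rw [← pow_succ'] at h2
      exact hpow_succ_le n h2
    have hmul2 : ∀ (n : ℕ) {a b : A}, a ∈ N ^ (n + 1) → b ∈ N → a * b ∈ N ^ (n + 2) := by
      intro n a b ha hb
      rw [pow_succ]
      exact Submodule.mul_mem_mul ha hb
    have hmul2' : ∀ (n : ℕ) {a b : A}, a ∈ N → b ∈ N ^ (n + 1) → a * b ∈ N ^ (n + 2) := by
      intro n a b ha hb
      rw [pow_succ']
      exact Submodule.mul_mem_mul ha hb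
    -- products of m elements of S vanish, hence N ^ m = 0
    have hNm : ∀ x ∈ N ^ m, x = 0 := by
      let Pgen : ℕ → Set A :=
        fun k => {x | ∃ f : Fin k → A, (∀ i, f i ∈ S) ∧ (List.ofFn f).prod = x}
      have hone : ∀ {x : A}, x ∈ N → x ∈ Submodule.span ℤ (Pgen 1) := by
        intro x hx
        exact Submodule.subset_span ⟨fun _ => x, fun _ => memN.mp hx, by simp⟩
      have hNpow_le : ∀ k : ℕ, N ^ (k + 1) ≤ Submodule.span ℤ (Pgen (k + 1)) := by
        intro k
        induction k with
        | zero =>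
          rw [pow_one]
          intro x hx
          exact hone hx
        | succ k ih =>
          rw [pow_succ]
          refine le_trans (mul_le_mul' ih (fun x hx => hone hx)) ?_
          rw [Submodule.span_mul_span]
          refine Submodule.span_le.mpr ?_
          rintro z hz
          rw [Set.mem_mul] at hz
          obtain ⟨x, hx, y, hy, rfl⟩ := hz
          obtain ⟨f, hf, rfl⟩ := hx
          obtain ⟨g, hg, rfl⟩ := hy
          refine Submodule.subset_span ⟨Fin.append f g, ?_, ?_⟩
          · intro i
            refine Fin.addCases (fun j => ?_) (fun j => ?_) i
            · rw [Fin.append_left]; exact hf j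
            · rw [Fin.append_right]; exact hg j
          · rw [List.ofFn_fin_append, List.prod_append]
      obtain ⟨mm, rfl⟩ : ∃ mm, m = mm + 1 := ⟨m - 1, by omega⟩
      intro x hx
      have hx2 := hNpow_le mm hx
      have hzero : Submodule.span ℤ (Pgen (mm + 1)) ≤ ⊥ := by
        refine Submodule.span_le.mpr ?_
        rintro y ⟨f, hf, rfl⟩
        simpa using hm f hf
      simpa using hzero hx2
    -- all elements u of K' have u - 1 ∈ N
    have bL : ∀ u : Aˣ, u ∈ K' → ((u : A) - 1 ∈ N) := by
      have main : ∀ u ∈ Subgroup.closure (T' : Set Aˣ),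
          ((u : A) - 1 ∈ N) ∧ (((u⁻¹ : Aˣ) : A) - 1 ∈ N) := by
        intro u hu
        induction hu using Subgroup.closure_induction with
        | mem u hu =>
          constructor
          · refine memN.mpr (NonUnitalSubring.subset_closure ?_)
            simp only [s, Finset.coe_union, Set.mem_union, Finset.coe_image, Set.mem_image,
              Finset.mem_coe]
            exact Or.inl ⟨u, hu, rfl⟩
          · refine memN.mpr (NonUnitalSubring.subset_closure ?_)
            simp only [s, Finset.coe_union, Set.mem_union, Finset.coe_image, Set.mem_image,
              Finset.mem_coe]
            exact Or.inr ⟨u, hu, rfl⟩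
        | one => simp
        | mul x y hx hy ihx ihy =>
          have key : ∀ a b : Aˣ, ((a : A) - 1 ∈ N) → ((b : A) - 1 ∈ N) →
              ((a * b : Aˣ) : A) - 1 ∈ N := by
            intro a b ha hb
            have e : ((a * b : Aˣ) : A) - 1
                = (((a : A) - 1) + ((b : A) - 1)) + ((a : A) - 1) * ((b : A) - 1) := by
              push_cast; noncomm_ring
            rw [e]
            exact add_mem (add_mem ha hb) (hNN (Submodule.mul_mem_mul ha hb))
          refine ⟨key x y ihx.1 ihy.1, ?_⟩
          rw [mul_inv_rev]
          exact key y⁻¹ x⁻¹ ihy.2 ihx.2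
        | inv x hx ihx =>
          refine ⟨ihx.2, ?_⟩
          rw [inv_inv]
          exact ihx.1
      intro u hu
      exact (main u (hT' ▸ hu)).1
    -- the subgroup chain
    have hDmul : ∀ (n : ℕ) (x y : Aˣ), ((x : A) - 1 ∈ N ^ (n + 1)) →
        ((y : A) - 1 ∈ N ^ (n + 1)) → ((x * y : Aˣ) : A) - 1 ∈ N ^ (n + 1) := by
      intro n x y hx hy
      have e : ((x * y : Aˣ) : A) - 1
          = (((x : A) - 1) + ((y : A) - 1)) + ((x : A) - 1) * ((y : A) - 1) := by
        push_cast; noncomm_ring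
      rw [e]
      exact add_mem (add_mem hx hy) (hmulN n hx (hpow_le_N n hy))
    have hDinv : ∀ (n : ℕ) (x : Aˣ), x ∈ K' → ((x : A) - 1 ∈ N ^ (n + 1)) →
        ((x⁻¹ : Aˣ) : A) - 1 ∈ N ^ (n + 1) := by
      intro n x hxK hx
      have hbN : ((x⁻¹ : Aˣ) : A) - 1 ∈ N := bL x⁻¹ (K'.inv_mem hxK)
      have hba : ((x⁻¹ : Aˣ) : A) * (x : A) = 1 := x.inv_mul
      set a : A := (x : A)
      set b : A := ((x⁻¹ : Aˣ) : A)
      have key : -((a - 1) + (b - 1) * (a - 1)) = b - b * a := by noncomm_ring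
      rw [hba] at key
      rw [← key]
      exact neg_mem (add_mem hx (hmulN' n hbN hx))
    let D : ℕ → Subgroup ↥K' := fun n =>
    { carrier := {x : ↥K' | (((x : Aˣ) : A) - 1) ∈ N ^ (n + 1)}
      one_mem' := by simp
      mul_mem' := by
        intro x y hx hy
        exact hDmul n (x : Aˣ) (y : Aˣ) hx hy
      inv_mem' := by
        intro x hx
        exact hDinv n (x : Aˣ) x.2 hx }
    have memD : ∀ (n : ℕ) (x : ↥K'), x ∈ D n ↔ (((x : Aˣ) : A) - 1) ∈ N ^ (n + 1) :=
      fun n x => Iff.rfl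
    -- commutators descend
    have comm_mem : ∀ (n : ℕ) (x y : Aˣ), x ∈ K' → y ∈ K' →
        ((x : A) - 1 ∈ N ^ (n + 1)) → ((⁅x, y⁆ : Aˣ) : A) - 1 ∈ N ^ (n + 2) := by
      intro n x y hxK hyK hx
      have hyN : (y : A) - 1 ∈ N := bL y hyK
      set a : A := (x : A)
      set b : A := (y : A)
      set a' : A := ((x⁻¹ : Aˣ) : A)
      set b' : A := ((y⁻¹ : Aˣ) : A)
      have haa : a * a' = 1 := x.mul_inv
      have hbb : b * b' = 1 := y.mul_inv
      have hw : a * b - b * a ∈ N ^ (n + 2) := by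
        have e : a * b - b * a = (a - 1) * (b - 1) - (b - 1) * (a - 1) := by noncomm_ring
        rw [e]
        exact sub_mem (hmul2 n hx hyN) (hmul2' n hyN hx)
      have hd : a' * b' - 1 ∈ N := by
        have : ((x⁻¹ * y⁻¹ : Aˣ) : A) - 1 ∈ N :=
          bL _ (K'.mul_mem (K'.inv_mem hxK) (K'.inv_mem hyK))
        simpa using this
      have e1 : (a * b - b * a) * (a' * b') = a * b * a' * b' - b * (a * a') * b' := by
        noncomm_ring
      rw [haa, mul_one, hbb] at e1
      have e2 : ((⁅x, y⁆ : Aˣ) : A) - 1 = a * b * a' * b' - 1 := by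
        show ((x * y * x⁻¹ * y⁻¹ : Aˣ) : A) - 1 = _
        push_cast
        rfl
      have e3 : (a * b - b * a) * (a' * b')
          = (a * b - b * a) + (a * b - b * a) * ((a' * b') - 1) := by noncomm_ring
      rw [e2, ← e1, e3]
      exact add_mem hw (hmulN (n + 1) hw hd)
    -- lower central series bound
    have lcs : ∀ n : ℕ, (⊤ : Subgroup ↥K').lowerCentralSeries n ≤ D n := by
      intro n
      induction n with
      | zero =>
        intro x _
        rw [memD]
        rw [pow_one]
        exact bL (x : Aˣ) x.2
      | succ n ih =>
        rw [Subgroup.lowerCentralSeries_succ]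
        refine Subgroup.commutator_le.mpr ?_
        intro g hg h _
        rw [memD]
        have hcoe : ((⁅g, h⁆ : ↥K') : Aˣ) = ⁅(g : Aˣ), (h : Aˣ)⁆ := rfl
        rw [hcoe]
        exact comm_mem n (g : Aˣ) (h : Aˣ) g.2 h.2 (ih hg)
    have hlcs_bot : (⊤ : Subgroup ↥K').lowerCentralSeries m = ⊥ := by
      rw [eq_bot_iff]
      intro x hx
      have h1 : ((x : Aˣ) : A) - 1 ∈ N ^ (m + 1) := lcs m hx
      obtain ⟨mm, hmm⟩ : ∃ mm, m = mm + 1 := ⟨m - 1, by omega⟩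
      have h2 : ((x : Aˣ) : A) - 1 ∈ N ^ m := by
        rw [hmm] at h1 ⊢
        exact hpow_succ_le mm h1
      have h0 : ((x : Aˣ) : A) - 1 = 0 := hNm _ h2
      have hx1 : ((x : Aˣ) : A) = 1 := by rwa [sub_eq_zero] at h0
      have : (x : Aˣ) = 1 := Units.ext (by simpa using hx1)
      simpa [Subgroup.mem_bot] using Subtype.ext this
    have hnil' : Group.IsNilpotent ↥K' :=
      Subgroup.nilpotent_iff_lowerCentralSeries.mpr ⟨m, hlcs_bot⟩
    exact @nilpotent_of_mulEquiv _ _ _ _ hnil'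
      (K.equivMapOfInjective H.subtype H.subtype_injective).symm
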